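/- Let k > 0 and let f : [0,1] → ℝ be continuous. Then ∫_0^1 ∫_0^1 G_k(z, z') f(z) f(z') dz dz' ≥ 0. -/

import Mathlib

open MeasureTheory intervalIntegral

/-- The Green's function of `−d²/dz² + k²` on `[0,1]` with vanishing Dirichlet
boundary conditions. -/
noncomputable def Gk (k z z' : ℝ) : ℝ :=
  (1 / (k * Real.sinh k)) * Real.sinh (k * min z z') * Real.sinh (k * (1 - max z z'))

/-- Auxiliary square-root kernel. -/
noncomputable def Fk (k r z : ℝ) : ℝ :=
  if r < z ∧ z ≤ 1 then Real.sinh (k * (1 - z)) / Real.sinh (k * (1 - r)) else 0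

lemma Fk_nonneg (k r z : ℝ) (hk : 0 < k) : 0 ≤ Fk k r z := by
  unfold Fk
  split_ifs with h
  · apply div_nonneg
    · exact Real.sinh_nonneg_iff.mpr (by nlinarith [h.2])
    · exact (Real.sinh_pos_iff.mpr (by nlinarith [h.1, h.2])).le
  · exact le_refl _

lemma Fk_le_one (k r z : ℝ) (hk : 0 < k) : Fk k r z ≤ 1 := by
  unfold Fk
  split_ifs with h
  · have hd : 0 < Real.sinh (k * (1 - r)) := Real.sinh_pos_iff.mpr (by nlinarith [h.1, h.2])
    rw [div_le_one hd]
    exact Real.sinh_le_sinh.mpr (by nlinarith [h.1])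
  · norm_num

lemma measurable_Fk (k : ℝ) : Measurable (fun p : ℝ × ℝ => Fk k p.1 p.2) := by
  unfold Fk
  apply Measurable.ite
  · exact (measurableSet_lt measurable_fst measurable_snd).inter
      (measurableSet_le measurable_snd measurable_const)
  · exact ((Real.continuous_sinh.comp (by continuity)).measurable).div
      ((Real.continuous_sinh.comp (by continuity)).measurable)
  · exact measurable_const

lemma Fk_identity_le (k : ℝ) (hk : 0 < k) {z z' : ℝ} (hz : z ∈ Set.Icc (0:ℝ) 1)
    (hz' : z' ∈ Set.Icc (0:ℝ) 1) (hle : z ≤ z') :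
    Gk k z z' = ∫ r in (0:ℝ)..1, Fk k r z * Fk k r z' := by
  have hk' : k ≠ 0 := hk.ne'
  have hsk : 0 < Real.sinh k := Real.sinh_pos_iff.mpr hk
  by_cases h1 : z' = 1
  · subst h1
    have hF1 : ∀ r, Fk k r 1 = 0 := by
      intro r; unfold Fk; split_ifs with h
      · simp
      · rfl
    have hmax : max z 1 = 1 := max_eq_right hz.2
    simp [Gk, hmax, hF1]
  · have hz'1 : z' < 1 := lt_of_le_of_ne hz'.2 h1
    have hz1 : z < 1 := lt_of_le_of_lt hle hz'1
    set c : ℝ := Real.sinh (k * (1 - z)) * Real.sinh (k * (1 - z')) with hc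
    set ψ : ℝ → ℝ := fun r => Fk k r z * Fk k r z' with hψ
    set χ : ℝ → ℝ := fun r => c / (Real.sinh (k * (1 - r)))^2 with hχ
    have hψint : ∀ a b : ℝ, IntervalIntegrable ψ volume a b := by
      intro a b
      rw [intervalIntegrable_iff]
      apply Integrable.mono' (g := fun _ => (1:ℝ))
        (integrableOn_const measure_Ioc_lt_top.ne)
      · exact (((measurable_Fk k).comp (measurable_id.prodMk measurable_const)).mul
          ((measurable_Fk k).comp (measurable_id.prodMk measurable_const))).aestronglyMeasurable
      · apply ae_of_all
        intro x
        have h1 := Fk_nonneg k x z hk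
        have h2 := Fk_nonneg k x z' hk
        have h3 := Fk_le_one k x z hk
        have h4 := Fk_le_one k x z' hk
        simp only [Real.norm_eq_abs, hψ, abs_mul]
        rw [abs_of_nonneg h1, abs_of_nonneg h2]
        nlinarith
    have hsplit : ∫ r in (0:ℝ)..1, ψ r = (∫ r in (0:ℝ)..z, ψ r) + ∫ r in z..1, ψ r :=
      (intervalIntegral.integral_add_adjacent_intervals (hψint 0 z) (hψint z 1)).symm
    have hright : ∫ r in z..1, ψ r = 0 := by
      rw [intervalIntegral.integral_congr (g := fun _ => (0:ℝ)), intervalIntegral.integral_zero]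
      intro r hr
      rw [Set.uIcc_of_le hz1.le] at hr
      have : ¬ r < z := not_lt.mpr hr.1
      simp [hψ, Fk, this]
    have hleft : ∫ r in (0:ℝ)..z, ψ r = ∫ r in (0:ℝ)..z, χ r := by
      apply intervalIntegral.integral_congr_ae
      have hne : ∀ᵐ x : ℝ, x ≠ z := by
        rw [ae_iff]
        simp only [not_ne_iff]
        simpa using measure_singleton z
      filter_upwards [hne] with x hx hmem
      rw [Set.uIoc_of_le hz.1] at hmem
      have hxz : x < z := lt_of_le_of_ne hmem.2 hx
      have hxz' : x < z' := lt_of_lt_of_le hxz hle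
      have hA : x < z ∧ z ≤ 1 := ⟨hxz, hz.2⟩
      have hB : x < z' ∧ z' ≤ 1 := ⟨hxz', hz'.2⟩
      simp only [hψ, hχ, Fk, hc]
      rw [if_pos hA, if_pos hB, div_mul_div_comm, ← sq]
    -- FTC computation for the smooth integrand
    set φ : ℝ → ℝ := fun r => (c / k) * (Real.cosh (k * (1 - r)) / Real.sinh (k * (1 - r))) with hφ
    have hderiv : ∀ x ∈ Set.uIcc (0:ℝ) z, HasDerivAt φ (χ x) x := by
      intro x hx
      rw [Set.uIcc_of_le hz.1] at hx
      have hxlt : x < 1 := lt_of_le_of_lt hx.2 hz1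
      have hspos : 0 < Real.sinh (k * (1 - x)) := Real.sinh_pos_iff.mpr (by nlinarith)
      have hu : HasDerivAt (fun r : ℝ => k * (1 - r)) (k * (0 - 1)) x :=
        ((hasDerivAt_const x (1:ℝ)).sub (hasDerivAt_id x)).const_mul k
      have hcosh : HasDerivAt (fun r => Real.cosh (k * (1 - r)))
          (Real.sinh (k * (1 - x)) * (k * (0 - 1))) x :=
        (Real.hasDerivAt_cosh _).comp x hu
      have hsinh : HasDerivAt (fun r => Real.sinh (k * (1 - r)))
          (Real.cosh (k * (1 - x)) * (k * (0 - 1))) x :=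
        (Real.hasDerivAt_sinh _).comp x hu
      have hdiv := (hcosh.div hsinh hspos.ne').const_mul (c / k)
      refine HasDerivAt.congr_deriv hdiv ?_
      symm
      have hid : Real.cosh (k * (1 - x)) ^ 2 = Real.sinh (k * (1 - x)) ^ 2 + 1 := Real.cosh_sq _
      have hnum : Real.sinh (k * (1 - x)) * (k * (0 - 1)) * Real.sinh (k * (1 - x)) -
          Real.cosh (k * (1 - x)) * (Real.cosh (k * (1 - x)) * (k * (0 - 1))) = k * 1 := by
        linear_combination k * hid
      simp only [hχ]
      rw [hnum, mul_one, mul_div_assoc', div_mul_cancel₀ c hk']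
    have hχint : IntervalIntegrable χ volume 0 z := by
      apply ContinuousOn.intervalIntegrable
      apply ContinuousOn.div
      · exact continuousOn_const
      · exact (Real.continuous_sinh.comp (by continuity)).continuousOn.pow 2
      · intro x hx
        rw [Set.uIcc_of_le hz.1] at hx
        have : 0 < Real.sinh (k * (1 - x)) := Real.sinh_pos_iff.mpr (by nlinarith [hx.2, hz1])
        positivity
    have hFTC : ∫ r in (0:ℝ)..z, χ r = φ z - φ 0 :=
      intervalIntegral.integral_eq_sub_of_hasDerivAt hderiv hχint
    have hszpos : 0 < Real.sinh (k * (1 - z)) := Real.sinh_pos_iff.mpr (by nlinarith)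
    have hmin : min z z' = z := min_eq_left hle
    have hmax : max z z' = z' := max_eq_right hle
    have hsinh_sub : Real.sinh (k * z) =
        Real.sinh k * Real.cosh (k * (1 - z)) - Real.cosh k * Real.sinh (k * (1 - z)) := by
      rw [show k * z = k - k * (1 - z) by ring, Real.sinh_sub]
    show Gk k z z' = ∫ r in (0:ℝ)..1, ψ r
    rw [hsplit, hright, hleft, hFTC]
    simp only [Gk, hφ, hmin, hmax, hc]
    rw [show k * (1 - 0) = k by ring]
    field_simp
    rw [hsinh_sub]
    ring

lemma Fk_identity (k : ℝ) (hk : 0 < k) {z z' : ℝ} (hz : z ∈ Set.Icc (0:ℝ) 1)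
    (hz' : z' ∈ Set.Icc (0:ℝ) 1) :
    Gk k z z' = ∫ r in (0:ℝ)..1, Fk k r z * Fk k r z' := by
  rcases le_total z z' with h | h
  · exact Fk_identity_le k hk hz hz' h
  · have h2 := Fk_identity_le k hk hz' hz h
    have hGsymm : Gk k z z' = Gk k z' z := by
      unfold Gk; rw [min_comm, max_comm]
    rw [hGsymm, h2]
    simp only [mul_comm]

/-- Positive semi-definiteness of the quadratic form associated with `G_k`
(Lemma 3.2): for `k > 0` and `f` continuous on `[0,1]`,
`∫_0^1 ∫_0^1 G_k(z,z') f(z) f(z') dz dz' ≥ 0`. -/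
theorem stmt8 (k : ℝ) (hk : 0 < k) (f : ℝ → ℝ) (hf : ContinuousOn f (Set.Icc 0 1)) :
    0 ≤ ∫ z in (0:ℝ)..1, ∫ z' in (0:ℝ)..1, Gk k z z' * f z * f z' := by
  -- replace `f` by a globally continuous, globally bounded function `g`
  set g : ℝ → ℝ := fun x => f (max 0 (min 1 x)) with hgdef
  have hclamp : ∀ x : ℝ, max 0 (min 1 x) ∈ Set.Icc (0:ℝ) 1 := fun x =>
    ⟨le_max_left _ _, max_le zero_le_one (min_le_left _ _)⟩
  have hgc : Continuous g := hf.comp_continuous (continuous_const.max (continuous_const.min continuous_id)) hclamp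
  have hgeq : ∀ x ∈ Set.Icc (0:ℝ) 1, g x = f x := by
    intro x hx
    simp only [hgdef]
    rw [min_eq_right hx.2, max_eq_right hx.1]
  obtain ⟨M, hM⟩ := isCompact_Icc.exists_bound_of_continuousOn hf
  have hgbd : ∀ x : ℝ, |g x| ≤ M := fun x => hM _ (hclamp x)
  have hM0 : 0 ≤ M := le_trans (abs_nonneg _) (hgbd 0)
  -- rewrite the statement in terms of `g`
  have hfg : (∫ z in (0:ℝ)..1, ∫ z' in (0:ℝ)..1, Gk k z z' * f z * f z')
      = ∫ z in (0:ℝ)..1, ∫ z' in (0:ℝ)..1, Gk k z z' * g z * g z' := by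
    apply intervalIntegral.integral_congr
    intro z hz
    rw [Set.uIcc_of_le zero_le_one] at hz
    apply intervalIntegral.integral_congr
    intro z' hz'
    rw [Set.uIcc_of_le zero_le_one] at hz'
    show Gk k z z' * f z * f z' = Gk k z z' * g z * g z'
    rw [hgeq z hz, hgeq z' hz']
  rw [hfg]
  set μ : Measure ℝ := volume.restrict (Set.Ioc (0:ℝ) 1) with hμdef
  haveI : IsFiniteMeasure μ := by
    constructor
    rw [hμdef, Measure.restrict_apply_univ, Real.volume_Ioc]
    norm_num
  have hμuniv : (μ Set.univ).toReal = 1 := by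
    rw [hμdef, Measure.restrict_apply_univ, Real.volume_Ioc]
    norm_num
  set Q : ℝ → ℝ → ℝ := fun r z => Fk k r z * g z with hQdef
  have hQm : Measurable (Function.uncurry Q) :=
    (measurable_Fk k).mul (hgc.measurable.comp measurable_snd)
  have hQbd : ∀ r z : ℝ, |Q r z| ≤ M := by
    intro r z
    rw [hQdef]
    simp only [abs_mul]
    calc |Fk k r z| * |g z| ≤ 1 * M := by
          apply mul_le_mul _ (hgbd z) (abs_nonneg _) zero_le_one
          rw [abs_of_nonneg (Fk_nonneg k r z hk)]
          exact Fk_le_one k r z hk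
      _ = M := one_mul M
  -- key pointwise identity
  have key : ∀ z ∈ Set.Ioc (0:ℝ) 1, ∀ z' ∈ Set.Ioc (0:ℝ) 1,
      Gk k z z' * g z * g z' = ∫ r, Q r z * Q r z' ∂μ := by
    intro z hz z' hz'
    rw [Fk_identity k hk (Set.Ioc_subset_Icc_self hz) (Set.Ioc_subset_Icc_self hz'),
      intervalIntegral.integral_of_le zero_le_one]
    rw [← MeasureTheory.integral_mul_const, ← MeasureTheory.integral_mul_const]
    apply MeasureTheory.integral_congr_ae
    apply ae_of_all
    intro r
    show Fk k r z * Fk k r z' * g z * g z' = Q r z * Q r z'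
    simp only [hQdef]
    ring
  -- rewrite double integral over restricted measures
  rw [intervalIntegral.integral_of_le zero_le_one]
  have hinner : ∀ z ∈ Set.Ioc (0:ℝ) 1,
      (∫ z' in (0:ℝ)..1, Gk k z z' * g z * g z') = ∫ z', (∫ r, Q r z * Q r z' ∂μ) ∂μ := by
    intro z hz
    rw [intervalIntegral.integral_of_le zero_le_one]
    apply setIntegral_congr_fun measurableSet_Ioc
    intro z' hz'
    exact key z hz z' hz'
  rw [setIntegral_congr_fun measurableSet_Ioc hinner]
  -- T r = ∫ Q r z' dμ(z')
  set T : ℝ → ℝ := fun r => ∫ z', Q r z' ∂μ with hTdef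
  have hTsm : StronglyMeasurable T :=
    (hQm.stronglyMeasurable).integral_prod_right
  have hTbd : ∀ r, |T r| ≤ M := by
    intro r
    have := norm_integral_le_of_norm_le_const (μ := μ) (f := fun z' => Q r z')
      (C := M) (ae_of_all _ fun z' => by rw [Real.norm_eq_abs]; exact hQbd r z')
    rw [measureReal_def, hμuniv, mul_one] at this
    exact le_trans (le_of_eq (Real.norm_eq_abs _).symm) this
  -- first swap: for each z
  have hswap1 : ∀ z : ℝ, (∫ z', (∫ r, Q r z * Q r z' ∂μ) ∂μ) = ∫ r, Q r z * T r ∂μ := by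
    intro z
    have hint : Integrable (Function.uncurry fun z' r => Q r z * Q r z') (μ.prod μ) := by
      apply Integrable.mono' (g := fun _ => M * M) (integrable_const _)
      · have m1 : Measurable fun p : ℝ × ℝ => Q p.2 z :=
          hQm.comp (measurable_snd.prodMk measurable_const)
        have m2 : Measurable fun p : ℝ × ℝ => Q p.2 p.1 :=
          hQm.comp (measurable_snd.prodMk measurable_fst)
        exact (m1.mul m2).aestronglyMeasurable
      · apply ae_of_all
        intro p
        rw [Real.norm_eq_abs]
        calc |Q p.2 z * Q p.2 p.1| = |Q p.2 z| * |Q p.2 p.1| := abs_mul _ _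
          _ ≤ M * M := mul_le_mul (hQbd _ _) (hQbd _ _) (abs_nonneg _) hM0
    rw [MeasureTheory.integral_integral_swap hint]
    apply MeasureTheory.integral_congr_ae
    apply ae_of_all
    intro r
    exact MeasureTheory.integral_const_mul _ _
  rw [setIntegral_congr_fun measurableSet_Ioc (fun z _ => hswap1 z)]
  -- second swap
  have hint2 : Integrable (Function.uncurry fun z r => Q r z * T r) (μ.prod μ) := by
    apply Integrable.mono' (g := fun _ => M * M) (integrable_const _)
    · exact ((hQm.comp measurable_swap).aestronglyMeasurable.mul
        ((hTsm.measurable.comp measurable_snd).aestronglyMeasurable))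
    · apply ae_of_all
      intro p
      rw [Real.norm_eq_abs]
      calc |Q p.2 p.1 * T p.2| = |Q p.2 p.1| * |T p.2| := abs_mul _ _
        _ ≤ M * M := mul_le_mul (hQbd _ _) (hTbd _) (abs_nonneg _) hM0
  rw [MeasureTheory.integral_integral_swap hint2]
  have hfin : ∀ r : ℝ, (∫ z, Q r z * T r ∂μ) = T r * T r := by
    intro r
    exact MeasureTheory.integral_mul_const (T r) (fun z => Q r z)
  rw [MeasureTheory.integral_congr_ae (ae_of_all _ hfin)]
  exact integral_nonneg fun r => mul_self_nonneg (T r)
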